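/- Let K be a field and A = T(V)/(R) a quadratic algebra with V finite-dimensional. Suppose there exist nonzero u, v ∈ V with both u⊗v ∈ R and v⊗u ∈ R. Then the quadratic dual algebra A^! = T(V*)/(R^⊥) is infinite-dimensional, where R^⊥ = {φ ∈ V*⊗V* : φ(r) = 0 for all r ∈ R}. -/

import Mathlib

open Module TensorProduct

-- X^n linearly independent
lemma lin_indep_X_pow (K : Type*) [Field K] :
    LinearIndependent K (fun n : ℕ => (Polynomial.X : Polynomial K) ^ n) := by
  rw [linearIndependent_iff']
  intro s g h i hi
  have := congrArg (fun p => Polynomial.coeff p i) h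
  simpa [Polynomial.finset_sum_coeff, Polynomial.coeff_smul, Polynomial.coeff_X_pow,
    Finset.sum_ite_eq', hi] using this


lemma std_diag_lemma {α : Type*} [Semiring α] (p q : α) :
    Matrix.single (0 : Fin 2) 0 p + Matrix.single (1 : Fin 2) 1 q =
      Matrix.diagonal ![p, q] := by
  ext i j
  fin_cases i <;> fin_cases j <;>
    simp [Matrix.single, Matrix.diagonal]

set_option maxHeartbeats 1000000 in
/-- If a quadratic algebra `A = T(V)/(R)` has `u⊗v, v⊗u ∈ R` for
nonzero `u, v ∈ V`, then the quadratic dual `A^! = T(V*)/(R^⊥)` is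
infinite-dimensional.  Here `R^⊥ ⊆ V*⊗V*` is the annihilator of `R` under the
canonical pairing, transported into the degree-2 component of `T(V*)` by the
multiplication map `φ ⊗ ψ ↦ ι φ * ι ψ`, and `A^!` is the quotient of `T(V*)` by
the two-sided ideal it generates. -/
theorem stmt3 (K : Type*) [Field K] (V : Type*) [AddCommGroup V] [Module K V]
    [FiniteDimensional K V]
    (R : Submodule K (V ⊗[K] V))
    (u v : V) (hu : u ≠ 0) (hv : v ≠ 0)
    (huv : u ⊗ₜ[K] v ∈ R) (hvu : v ⊗ₜ[K] u ∈ R) :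
    ¬ FiniteDimensional K
      (TensorAlgebra K (Module.Dual K V) ⧸
        (⊤ * (Submodule.map
            (TensorProduct.lift
              ((LinearMap.mul K (TensorAlgebra K (Module.Dual K V))).compl₁₂
                (TensorAlgebra.ι K) (TensorAlgebra.ι K)))
            (Submodule.comap (TensorProduct.dualDistrib K V V)
              (Submodule.dualAnnihilator R))) * ⊤ :
          Submodule K (TensorAlgebra K (Module.Dual K V)))) := by
  intro hfin
  classical
  -- dual functionals hitting u and v
  obtain ⟨φ', hφ'⟩ : ∃ φ : Module.Dual K V, φ u ≠ 0 := by
    by_contra h; push_neg at h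
    exact hu ((Module.forall_dual_apply_eq_zero_iff K u).mp h)
  obtain ⟨ψ', hψ'⟩ : ∃ ψ : Module.Dual K V, ψ v ≠ 0 := by
    by_contra h; push_neg at h
    exact hv ((Module.forall_dual_apply_eq_zero_iff K v).mp h)
  set φ₀ : Module.Dual K V := (φ' u)⁻¹ • φ' with hφ₀def
  set ψ₀ : Module.Dual K V := (ψ' v)⁻¹ • ψ' with hψ₀def
  have hφ₀ : φ₀ u = 1 := by simp [hφ₀def, inv_mul_cancel₀ hφ']
  have hψ₀ : ψ₀ v = 1 := by simp [hψ₀def, inv_mul_cancel₀ hψ']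
  -- the target algebra
  set M := Matrix (Fin 2) (Fin 2) (Polynomial K) with hM
  set a : M := Matrix.single 0 1 1 with hadef
  set b : M := Matrix.single 1 0 Polynomial.X with hbdef
  have haa : a * a = 0 := by rw [hadef]; exact Matrix.single_mul_single_of_ne 1 (0 : Fin 2) (1 : Fin 2) (0 : Fin 2) (by decide) 1
  have hbb : b * b = 0 := by rw [hbdef]; exact Matrix.single_mul_single_of_ne Polynomial.X (1 : Fin 2) (0 : Fin 2) (1 : Fin 2) (by decide) Polynomial.X
  have hab : a * b = Matrix.single 0 0 Polynomial.X := by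
    rw [hadef, hbdef, Matrix.single_mul_single_same, one_mul]
  have hba : b * a = Matrix.single 1 1 Polynomial.X := by
    rw [hadef, hbdef, Matrix.single_mul_single_same, mul_one]
  -- linear map Dual V → M
  let ℓ : Module.Dual K V →ₗ[K] M :=
    { toFun := fun φ => φ u • a + φ v • b
      map_add' := fun φ ψ => by simp [add_smul]; abel
      map_smul' := fun c φ => by simp [smul_smul, smul_add] }
  have hℓ : ∀ φ : Module.Dual K V, ℓ φ = φ u • a + φ v • b := fun _ => rfl
  let F : TensorAlgebra K (Module.Dual K V) →ₐ[K] M := TensorAlgebra.lift K ℓ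
  set B := ((LinearMap.mul K (TensorAlgebra K (Module.Dual K V))).compl₁₂
      (TensorAlgebra.ι K) (TensorAlgebra.ι K)) with hB
  set S := Submodule.map (TensorProduct.lift B)
      (Submodule.comap (TensorProduct.dualDistrib K V V) (Submodule.dualAnnihilator R)) with hS
  -- key computation
  have key : ∀ ω : Module.Dual K V ⊗[K] Module.Dual K V,
      F (TensorProduct.lift B ω) =
        (TensorProduct.dualDistrib K V V ω) (u ⊗ₜ[K] v) • (a * b) +
        (TensorProduct.dualDistrib K V V ω) (v ⊗ₜ[K] u) • (b * a) := by
    intro ω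
    induction ω using TensorProduct.induction_on with
    | zero => simp
    | tmul φ ψ =>
        rw [TensorProduct.lift.tmul, hB]
        simp only [LinearMap.compl₁₂_apply, LinearMap.mul_apply']
        rw [map_mul, TensorAlgebra.lift_ι_apply, TensorAlgebra.lift_ι_apply,
          hℓ, hℓ, TensorProduct.dualDistrib_apply, TensorProduct.dualDistrib_apply]
        rw [add_mul, mul_add, mul_add, smul_mul_smul_comm, smul_mul_smul_comm, smul_mul_smul_comm,
          smul_mul_smul_comm, haa, hbb, smul_zero, smul_zero]
        abel
    | add x y hx hy =>
        rw [map_add, map_add, hx, hy, map_add]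
        simp only [LinearMap.add_apply, add_smul]
        abel
  -- F kills S
  have hFS : ∀ s ∈ S, F s = 0 := by
    rintro s hs
    rw [hS] at hs
    obtain ⟨ω, hω, rfl⟩ := hs
    have hω' : TensorProduct.dualDistrib K V V ω ∈ R.dualAnnihilator := hω
    rw [Submodule.mem_dualAnnihilator] at hω'
    rw [key, hω' _ huv, hω' _ hvu, zero_smul, zero_smul, add_zero]
  -- the ideal is in the kernel of F
  have hker : (⊤ * S * ⊤ : Submodule K (TensorAlgebra K (Module.Dual K V))) ≤
      LinearMap.ker F.toLinearMap := by
    refine Submodule.mul_le.mpr ?_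
    intro x hx y _
    have hx0 : F x = 0 := by
      revert hx
      refine fun hx => ?_
      have : x ∈ LinearMap.ker F.toLinearMap := by
        revert x
        refine fun x hx => Submodule.mul_le.mpr ?_ hx
        intro t _ s hsS
        rw [LinearMap.mem_ker]
        show F (t * s) = 0
        rw [map_mul, hFS s hsS, mul_zero]
      exact this
    rw [LinearMap.mem_ker]
    show F (x * y) = 0
    rw [map_mul, hx0, zero_mul]
  -- descend to the quotient
  set J : Submodule K (TensorAlgebra K (Module.Dual K V)) := ⊤ * S * ⊤ with hJ
  let Fbar := J.liftQ F.toLinearMap hker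
  -- the family of powers
  let w : TensorAlgebra K (Module.Dual K V) := TensorAlgebra.ι K φ₀ * TensorAlgebra.ι K ψ₀
  let q : ℕ → TensorAlgebra K (Module.Dual K V) ⧸ J := fun n => J.mkQ (w ^ n)
  -- compute F w
  set β : K := φ₀ v * ψ₀ u with hβ
  have hwB : w = TensorProduct.lift B (φ₀ ⊗ₜ[K] ψ₀) := by
    rw [TensorProduct.lift.tmul, hB]
    simp only [LinearMap.compl₁₂_apply, LinearMap.mul_apply']
    rfl
  have hFw : F w = Matrix.diagonal ![Polynomial.X, β • Polynomial.X] := by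
    rw [hwB, key, TensorProduct.dualDistrib_apply, TensorProduct.dualDistrib_apply,
      hφ₀, hψ₀, one_mul, one_smul, hab, hba, ← hβ, Matrix.smul_single]
    exact std_diag_lemma _ _
  -- entry (0,0) as a linear map
  let e : M →ₗ[K] Polynomial K :=
    { toFun := fun m => m 0 0
      map_add' := fun _ _ => rfl
      map_smul' := fun _ _ => rfl }
  have he : ∀ m : M, e m = m 0 0 := fun _ => rfl
  have hLq : ∀ n : ℕ, (e ∘ₗ Fbar) (q n) = Polynomial.X ^ n := by
    intro n
    have h1 : Fbar (q n) = F (w ^ n) := by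
      show Fbar (J.mkQ (w ^ n)) = F (w ^ n)
      rw [Submodule.mkQ_apply, Submodule.liftQ_apply]
      rfl
    have h2 : F (w ^ n) = (F w) ^ n := map_pow F w n
    show e (Fbar (q n)) = Polynomial.X ^ n
    rw [h1, h2, hFw, Matrix.diagonal_pow, he, Matrix.diagonal_apply_eq, Pi.pow_apply]
    simp
  have hli : LinearIndependent K q := by
    apply LinearIndependent.of_comp (e ∘ₗ Fbar)
    have : (fun n : ℕ => (e ∘ₗ Fbar) (q n)) = fun n : ℕ => (Polynomial.X : Polynomial K) ^ n := by
      funext n; exact hLq n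
    show LinearIndependent K fun n : ℕ => (e ∘ₗ Fbar) (q n)
    rw [this]
    exact lin_indep_X_pow K
  exact Module.Finite.not_linearIndependent_of_infinite q hli
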